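/- Suppose $r = r(n) > 0$ satisfies $n\omega_d r^d \cdot r \to 0$ and $n\omega_d r^d \to \infty$ as $n \to \infty$, where $\omega_d > 0$ and $d \ge 1$ are fixed. Define $r_0 = r\left(\frac{\omega_d}{\alpha}(1 + |\log r|)\right)^{1/d}$ for a fixed constant $\alpha \in (0, \omega_d)$. Then (a) $r/r_0 \to 0$, (b) $n\omega_d r_0^d \cdot r_0^2 \to 0$, and (c) for any fixed $k \ge 0$, $r_0^{-d} n^{k+1} e^{-\alpha n r_0^d} = o\left(n(n\omega_d r^d)^k e^{-n\omega_d r^d}\right)$. -/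

import Mathlib

open Filter Real Asymptotics

/-- Properties of the auxiliary radius `r₀ = r (ω_d/α (1 + |log r|))^{1/d}`:
(a) `r/r₀ → 0`, (b) `n ω_d r₀^d · r₀² → 0`, and
(c) `r₀^{-d} n^{k+1} e^{-α n r₀^d} = o(n Λ^k e^{-Λ})` where `Λ = n ω_d r^d`. -/
theorem stmt_17 (d : ℕ) (hd : 1 ≤ d) (ωd : ℝ) (hωd : 0 < ωd)
    (r r₀ : ℕ → ℝ) (hr : ∀ n, 0 < r n)
    (h1 : Tendsto (fun n : ℕ => (n : ℝ) * ωd * r n ^ d * r n) atTop (nhds 0))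
    (h2 : Tendsto (fun n : ℕ => (n : ℝ) * ωd * r n ^ d) atTop atTop)
    (α : ℝ) (hα : 0 < α) (hα' : α < ωd)
    (hr₀ : ∀ n, r₀ n = r n * (ωd / α * (1 + |Real.log (r n)|)) ^ ((1 : ℝ) / d))
    (k : ℕ) :
    Tendsto (fun n : ℕ => r n / r₀ n) atTop (nhds 0) ∧
    Tendsto (fun n : ℕ => (n : ℝ) * ωd * r₀ n ^ d * r₀ n ^ 2) atTop (nhds 0) ∧
    (fun n : ℕ => (n : ℝ) ^ (k + 1) * Real.exp (-(α * n * r₀ n ^ d)) / r₀ n ^ d)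
      =o[atTop]
      (fun n : ℕ => (n : ℝ) * ((n : ℝ) * ωd * r n ^ d) ^ k *
        Real.exp (-((n : ℝ) * ωd * r n ^ d))) := by
  have hd0 : (d : ℝ) ≠ 0 := by
    have : 0 < d := hd
    positivity
  have hdpos : (0 : ℝ) < d := by
    have : 0 < d := hd
    positivity
  set c : ℝ := ωd / α with hc
  have hc1 : 1 < c := (one_lt_div hα).2 hα'
  set L : ℕ → ℝ := fun n => c * (1 + |Real.log (r n)|) with hLdef
  have hL1 : ∀ n, 1 ≤ L n := by
    intro n
    have h := abs_nonneg (Real.log (r n))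
    have : (1 : ℝ) ≤ 1 + |Real.log (r n)| := by linarith
    show (1:ℝ) ≤ c * (1 + |Real.log (r n)|)
    nlinarith
  have hLpos : ∀ n, 0 < L n := fun n => lt_of_lt_of_le one_pos (hL1 n)
  have hr0pos : ∀ n, 0 < r₀ n := by
    intro n
    rw [hr₀ n]
    have := hr n
    have := hLpos n
    positivity
  have hr0d : ∀ n, r₀ n ^ d = r n ^ d * L n := by
    intro n
    rw [hr₀ n, mul_pow]
    congr 1
    rw [← Real.rpow_natCast ((L n) ^ ((1 : ℝ) / d)) d, ← Real.rpow_mul (hLpos n).le,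
      one_div, inv_mul_cancel₀ hd0, Real.rpow_one]
  set Λ : ℕ → ℝ := fun n => (n : ℝ) * ωd * r n ^ d with hΛdef
  have hΛpos : ∀ᶠ n in atTop, 0 < Λ n := h2.eventually_gt_atTop 0
  have hrlim : Tendsto r atTop (nhds 0) := by
    have h := h1.div_atTop h2
    apply h.congr'
    filter_upwards [hΛpos] with n hn
    field_simp
    simp only [hΛdef]; ring
  have hrlt1 : ∀ᶠ n in atTop, r n < 1 := hrlim.eventually_lt_const one_pos
  have hlog : Tendsto (fun n => Real.log (r n)) atTop atBot := by
    apply Real.tendsto_log_nhdsGT_zero.comp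
    apply tendsto_nhdsWithin_of_tendsto_nhds_of_eventually_within _ hrlim
    exact Eventually.of_forall fun n => hr n
  have hX : Tendsto (fun n => -Real.log (r n)) atTop atTop :=
    tendsto_neg_atBot_atTop.comp hlog
  have habs : Tendsto (fun n => |Real.log (r n)|) atTop atTop :=
    tendsto_abs_atBot_atTop.comp hlog
  have hLtop : Tendsto L atTop atTop := by
    apply Tendsto.const_mul_atTop (lt_trans one_pos hc1)
    exact tendsto_atTop_add_const_left _ 1 habs
  -- part (a)
  have parta : Tendsto (fun n : ℕ => r n / r₀ n) atTop (nhds 0) := by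
    have h : Tendsto (fun n => ((L n ^ ((1 : ℝ) / d))⁻¹ : ℝ)) atTop (nhds 0) :=
      Tendsto.inv_tendsto_atTop ((tendsto_rpow_atTop (by positivity)).comp hLtop)
    apply h.congr
    intro n
    rw [hr₀ n]
    have h1' : r n ≠ 0 := (hr n).ne'
    have h2' : L n ^ ((1 : ℝ) / d) ≠ 0 := (Real.rpow_pos_of_pos (hLpos n) _).ne'
    field_simp
    rfl
  -- part (b)
  have hLle : ∀ n, L n ^ ((1 : ℝ) / d) ≤ L n := by
    intro n
    have := Real.rpow_le_rpow_of_exponent_le (hL1 n) (by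
      rw [div_le_one hdpos]
      exact_mod_cast hd : (1 : ℝ) / d ≤ 1)
    rwa [Real.rpow_one] at this
  have hEle : ∀ n : ℕ, (n : ℝ) * ωd * r₀ n ^ d * r₀ n ^ 2 ≤ (Λ n * r n) * (r n * L n ^ 3) := by
    intro n
    have hle : r₀ n ≤ r n * L n := by
      rw [hr₀ n]
      exact mul_le_mul_of_nonneg_left (hLle n) (hr n).le
    calc (n : ℝ) * ωd * r₀ n ^ d * r₀ n ^ 2 = (Λ n * L n) * r₀ n ^ 2 := by
          rw [hr0d n]; simp only [hΛdef]; ring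
      _ ≤ (Λ n * L n) * (r n * L n) ^ 2 := by
          apply mul_le_mul_of_nonneg_left _ (by
            have := (hLpos n); have := hr n; positivity)
          exact pow_le_pow_left₀ (hr0pos n).le hle 2
      _ = (Λ n * r n) * (r n * L n ^ 3) := by ring
  have hrL3 : Tendsto (fun n => r n * L n ^ 3) atTop (nhds 0) := by
    have hbase : Tendsto (fun x : ℝ => x ^ 3 * Real.exp (-x)) atTop (nhds 0) :=
      tendsto_pow_mul_exp_neg_atTop_nhds_zero 3
    have h1X : Tendsto (fun n => 1 + -Real.log (r n)) atTop atTop :=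
      tendsto_atTop_add_const_left _ 1 hX
    have htail := hbase.comp h1X
    have h' := htail.const_mul (c ^ 3 * Real.exp 1)
    rw [mul_zero] at h'
    apply h'.congr'
    filter_upwards [hrlt1] with n hn
    have hlr : Real.log (r n) < 0 := Real.log_neg (hr n) hn
    have hre : r n = Real.exp (Real.log (r n)) := (Real.exp_log (hr n)).symm
    simp only [Function.comp_apply, hLdef, abs_of_neg hlr]
    rw [show -(1 + -Real.log (r n)) = Real.log (r n) + -1 by ring, Real.exp_add,
      Real.exp_neg]
    rw [hre]
    have := Real.exp_ne_zero (1 : ℝ)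
    field_simp
    simp only [Real.log_exp]
  have partb : Tendsto (fun n : ℕ => (n : ℝ) * ωd * r₀ n ^ d * r₀ n ^ 2) atTop (nhds 0) := by
    have hprod := h1.mul hrL3
    rw [mul_zero] at hprod
    apply squeeze_zero' (g := fun n => (Λ n * r n) * (r n * L n ^ 3))
    · apply Eventually.of_forall
      intro n
      have := hr0pos n
      positivity
    · exact Eventually.of_forall hEle
    · exact hprod
  refine ⟨parta, partb, ?_⟩
  -- part (c)
  have hΛge : ∀ᶠ n in atTop, (1 : ℝ) + d * (k + 1) ≤ Λ n := h2.eventually_ge_atTop _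
  rw [isLittleO_iff_tendsto']
  swap
  · filter_upwards [hΛpos, eventually_gt_atTop 0] with n hΛ hn h
    exfalso
    have hnp : (0 : ℝ) < n := by exact_mod_cast hn
    have : (0 : ℝ) < (n : ℝ) * Λ n ^ k * Real.exp (-Λ n) := by positivity
    rw [h] at this
    exact lt_irrefl 0 this
  · apply squeeze_zero' (g := fun n => Real.exp (-(-Real.log (r n))) / ωd ^ k)
    · apply Eventually.of_forall
      intro n
      have h1' : 0 ≤ (n : ℝ) ^ (k + 1) * Real.exp (-(α * n * r₀ n ^ d)) / r₀ n ^ d := by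
        have := hr0pos n
        positivity
      have h2' : 0 ≤ (n : ℝ) * Λ n ^ k * Real.exp (-Λ n) := by
        have : (0 : ℝ) ≤ Λ n := by
          have := (hr n).le; simp only [hΛdef]; positivity
        positivity
      exact div_nonneg h1' h2'
    · filter_upwards [hrlt1, hΛge, eventually_ge_atTop 1] with n hr1 hΛn hn1
      have ha : 0 < r n := hr n
      have hlr : Real.log (r n) < 0 := Real.log_neg ha hr1
      set x : ℝ := -Real.log (r n) with hxdef
      have hx : 0 < x := neg_pos.2 hlr
      have hLn : L n = c * (1 + x) := by
        rw [hLdef]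
        simp [abs_of_neg hlr]
        exact Or.inl hxdef.symm
      have hA : α * n * r₀ n ^ d = Λ n * (1 + x) := by
        rw [hr0d n, hLn]
        simp only [hΛdef, hc]
        field_simp
      have hnp : (0 : ℝ) < n := by exact_mod_cast hn1
      have hΛp : 0 < Λ n := lt_of_lt_of_le (by positivity) hΛn
      have hgp : 0 < (n : ℝ) * Λ n ^ k * Real.exp (-Λ n) := by positivity
      rw [div_le_div_iff₀ hgp (pow_pos hωd k), hA, hr0d n]
      have hrx : r n = Real.exp (-x) := by
        rw [hxdef, neg_neg, Real.exp_log ha]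
      have hΛk : Λ n ^ k = (n : ℝ) ^ k * ωd ^ k * r n ^ (d * k) := by
        simp only [hΛdef]; rw [mul_pow, mul_pow, pow_mul]
      have key : Real.exp (-(Λ n * (1 + x))) ≤
          Real.exp (-Λ n) * (Real.exp (-x) * r n ^ (d * k) * r n ^ d) := by
        rw [hrx, ← Real.exp_nat_mul, ← Real.exp_nat_mul, ← Real.exp_add, ← Real.exp_add,
          ← Real.exp_add, Real.exp_le_exp]
        push_cast
        nlinarith [mul_nonneg (sub_nonneg.2 hΛn) hx.le]
      have hdenle : r n ^ d * 1 ≤ r n ^ d * L n :=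
        mul_le_mul_of_nonneg_left (hL1 n) (by positivity)
      have hfrac : Real.exp (-(Λ n * (1 + x))) / (r n ^ d * L n) ≤
          (Real.exp (-Λ n) * (Real.exp (-x) * r n ^ (d * k) * r n ^ d)) / (r n ^ d * 1) :=
        div_le_div₀ (by positivity) key (by positivity) hdenle
      calc (n : ℝ) ^ (k + 1) * Real.exp (-(Λ n * (1 + x))) / (r n ^ d * L n) * ωd ^ k
          = ((n : ℝ) ^ (k + 1) * ωd ^ k) *
            (Real.exp (-(Λ n * (1 + x))) / (r n ^ d * L n)) := by ring
        _ ≤ ((n : ℝ) ^ (k + 1) * ωd ^ k) *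
            ((Real.exp (-Λ n) * (Real.exp (-x) * r n ^ (d * k) * r n ^ d)) / (r n ^ d * 1)) := by
            apply mul_le_mul_of_nonneg_left hfrac (by positivity)
        _ = Real.exp (-x) * ((n : ℝ) * Λ n ^ k * Real.exp (-Λ n)) := by
            rw [hΛk, pow_succ, mul_one]
            have : r n ^ d ≠ 0 := by positivity
            field_simp
    · have : Tendsto (fun n => Real.exp (-(-Real.log (r n)))) atTop (nhds 0) :=
        Real.tendsto_exp_atBot.comp (tendsto_neg_atTop_atBot.comp hX)
      simpa using this.div_const (ωd ^ k)
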